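/- Let T be a nonnegative tensor of order k ≥ 2 and dimension n with all row sums positive. Then min_{1 ≤ i ≤ n} m_i(T) ≤ ρ(T) ≤ max_{1 ≤ i ≤ n} m_i(T), where ρ(T) is the spectral radius of T and m_i(T) is the i-th average 2-row sum. -/

import Mathlib

/-- The `i`-th row sum of an order-`k` tensor of dimension `n`. -/
noncomputable def rowSum (n k : ℕ) (T : Fin n → (Fin (k-1) → Fin n) → ℝ) (i : Fin n) : ℝ :=
  ∑ f : Fin (k-1) → Fin n, T i f

/-- The `i`-th average 2-row sum of an order-`k` tensor of dimension `n`. -/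
noncomputable def avgRowSum (n k : ℕ) (T : Fin n → (Fin (k-1) → Fin n) → ℝ) (i : Fin n) : ℝ :=
  (∑ f : Fin (k-1) → Fin n, T i f * ∏ a, rowSum n k T (f a)) / (rowSum n k T i) ^ (k-1)

/-- The spectral radius of an order-`k` tensor of dimension `n`: the largest modulus of its
(complex) eigenvalues, where `ρ` is an eigenvalue if `T x = ρ x^{[k-1]}` for some `x ≠ 0`. -/
noncomputable def specRad (n k : ℕ) (T : Fin n → (Fin (k-1) → Fin n) → ℝ) : ℝ :=
  sSup {r : ℝ | ∃ ρ : ℂ, ‖ρ‖ = r ∧ ∃ x : Fin n → ℂ, x ≠ 0 ∧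
    ∀ i, (∑ f : Fin (k-1) → Fin n, (T i f : ℂ) * ∏ a, x (f a)) = ρ * x i ^ (k-1)}


noncomputable def tapp {n d : ℕ} (P : Fin n → (Fin d → Fin n) → ℝ) (z : Fin n → ℝ) (i : Fin n) : ℝ :=
  ∑ f : Fin d → Fin n, P i f * ∏ a, z (f a)

lemma tapp_cont {n d : ℕ} (P : Fin n → (Fin d → Fin n) → ℝ) (i : Fin n) :
    Continuous fun z : Fin n → ℝ => tapp P z i := by
  unfold tapp
  exact continuous_finset_sum _ fun f _ =>
    continuous_const.mul (continuous_finset_prod _ fun a _ => continuous_apply (f a))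

lemma exists_pos_coord {n : ℕ} {z : Fin n → ℝ} (h0 : ∀ i, 0 ≤ z i) (h1 : ∑ i, z i = 1) :
    ∃ j, 0 < z j := by
  by_contra h
  push_neg at h
  have : ∑ i, z i = 0 := Finset.sum_eq_zero fun i _ => le_antisymm (h i) (h0 i)
  rw [this] at h1; norm_num at h1

lemma tapp_pos {n d : ℕ} {P : Fin n → (Fin d → Fin n) → ℝ} (hP : ∀ i f, 0 < P i f)
    {z : Fin n → ℝ} (h0 : ∀ i, 0 ≤ z i) (hj : ∃ j, 0 < z j) (i : Fin n) : 0 < tapp P z i := by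
  obtain ⟨j, hjpos⟩ := hj
  have key : 0 < P i (fun _ => j) * ∏ _a : Fin d, z j :=
    mul_pos (hP _ _) (Finset.prod_pos fun _ _ => hjpos)
  refine lt_of_lt_of_le key (Finset.single_le_sum
    (f := fun f : Fin d → Fin n => P i f * ∏ a, z (f a))
    (fun f _ => mul_nonneg (hP i f).le (Finset.prod_nonneg fun a _ => h0 _)) (Finset.mem_univ _))

lemma feas_le {n d : ℕ} (hn : 0 < n) (hd : 0 < d) {P : Fin n → (Fin d → Fin n) → ℝ}
    (hP : ∀ i f, 0 ≤ P i f) {t : ℝ} {z : Fin n → ℝ} (h0 : ∀ i, 0 ≤ z i) (h1 : ∑ i, z i = 1)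
    (hfe : ∀ i, t * z i ^ d ≤ tapp P z i) {C : ℝ}
    (hC : ∀ i, (∑ f : Fin d → Fin n, P i f) ≤ C) : t ≤ C := by
  obtain ⟨i, -, hmax⟩ := Finset.exists_max_image Finset.univ z ⟨⟨0, hn⟩, Finset.mem_univ _⟩
  obtain ⟨j, hj⟩ := exists_pos_coord h0 h1
  have hzi : 0 < z i := lt_of_lt_of_le hj (hmax j (Finset.mem_univ _))
  have hb : tapp P z i ≤ (∑ f : Fin d → Fin n, P i f) * z i ^ d := by
    rw [Finset.sum_mul]
    refine Finset.sum_le_sum fun f _ => mul_le_mul_of_nonneg_left ?_ (hP i f)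
    calc ∏ a, z (f a) ≤ ∏ _a : Fin d, z i :=
          Finset.prod_le_prod (fun a _ => h0 _) (fun a _ => hmax (f a) (Finset.mem_univ _))
      _ = z i ^ d := by simp [Finset.prod_const]
  have h2 : t * z i ^ d ≤ C * z i ^ d :=
    (hfe i).trans (hb.trans (mul_le_mul_of_nonneg_right (hC i) (by positivity)))
  exact le_of_mul_le_mul_right h2 (by positivity)

lemma perron_pos {n d : ℕ} (hn : 0 < n) (hd : 0 < d) (P : Fin n → (Fin d → Fin n) → ℝ)
    (hP : ∀ i f, 0 < P i f) :
    ∃ r z, 0 ≤ r ∧ (∀ i, 0 ≤ z i) ∧ (∑ i, z i = 1) ∧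
      (∀ i, tapp P z i = r * z i ^ d) ∧
      (∀ c, (∀ i, c ≤ ∑ f : Fin d → Fin n, P i f) → c ≤ r) ∧
      (∀ C, (∀ i, (∑ f : Fin d → Fin n, P i f) ≤ C) → r ≤ C) := by
  have i0 : Fin n := ⟨0, hn⟩
  set M : ℝ := Finset.univ.sup' ⟨i0, Finset.mem_univ _⟩
      (fun i => ∑ f : Fin d → Fin n, P i f) with hM
  have hMle : ∀ i, (∑ f : Fin d → Fin n, P i f) ≤ M := by
    intro i; rw [hM]
    exact Finset.le_sup' (fun i => ∑ f : Fin d → Fin n, P i f) (Finset.mem_univ i)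
  set A : Set (ℝ × (Fin n → ℝ)) := {p | 0 ≤ p.1 ∧ p.1 ≤ M ∧ (∀ i, 0 ≤ p.2 i) ∧
      (∑ i, p.2 i = 1) ∧ ∀ i, p.1 * p.2 i ^ d ≤ tapp P p.2 i} with hA
  have hn' : (0:ℝ) < n := by exact_mod_cast hn
  set u : Fin n → ℝ := fun _ => (n : ℝ)⁻¹ with hu
  have hu0 : ∀ i : Fin n, 0 ≤ u i := fun i => by positivity
  have hu1 : ∑ i, u i = 1 := by
    simp [hu, Finset.card_univ]
    field_simp
  have htappu : ∀ i, tapp P u i = (∑ f : Fin d → Fin n, P i f) * ((n:ℝ)⁻¹) ^ d := by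
    intro i
    simp [tapp, hu, Finset.prod_const, Finset.card_univ, ← Finset.sum_mul]
  have hmemc : ∀ c : ℝ, 0 ≤ c → (∀ i, c ≤ ∑ f : Fin d → Fin n, P i f) → (c, u) ∈ A := by
    intro c hc hci
    refine ⟨hc, le_trans (hci i0) (hMle i0), hu0, hu1, fun i => ?_⟩
    rw [htappu i]
    show c * ((n:ℝ)⁻¹) ^ d ≤ _
    exact mul_le_mul_of_nonneg_right (hci i) (by positivity)
  have hmem0 : ((0:ℝ), u) ∈ A :=
    hmemc 0 le_rfl (fun i => Finset.sum_nonneg fun f _ => (hP i f).le)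
  have hAsub : A ⊆ Set.Icc ((0:ℝ), fun _ => 0) (M, fun _ => 1) := by
    rintro ⟨t, z⟩ ⟨h0t, htM, hz0, hz1, -⟩
    refine ⟨⟨h0t, fun i => hz0 i⟩, ⟨htM, fun i => ?_⟩⟩
    exact (Finset.single_le_sum (fun j _ => hz0 j) (Finset.mem_univ i)).trans_eq hz1
  have hAclosed : IsClosed A := by
    rw [hA]
    simp only [Set.setOf_and]
    refine IsClosed.inter ?_ (IsClosed.inter ?_ (IsClosed.inter ?_ (IsClosed.inter ?_ ?_)))
    · exact isClosed_le continuous_const continuous_fst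
    · exact isClosed_le continuous_fst continuous_const
    · rw [Set.setOf_forall]
      exact isClosed_iInter fun i =>
        isClosed_le continuous_const ((continuous_apply i).comp continuous_snd)
    · exact isClosed_eq
        (continuous_finset_sum _ fun i _ => (continuous_apply i).comp continuous_snd)
        continuous_const
    · rw [Set.setOf_forall]
      exact isClosed_iInter fun i => isClosed_le
        (continuous_fst.mul (((continuous_apply i).comp continuous_snd).pow d))
        ((tapp_cont P i).comp continuous_snd)
  have hAcomp : IsCompact A := IsCompact.of_isClosed_subset isCompact_Icc hAclosed hAsub
  obtain ⟨⟨r, z⟩, hrzA, hmax⟩ :=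
    hAcomp.exists_isMaxOn ⟨(0, u), hmem0⟩ continuous_fst.continuousOn
  obtain ⟨hr0, hrM, hz0, hz1, hfe⟩ := hrzA
  have hmax' : ∀ p ∈ A, p.1 ≤ r := fun p hp => hmax hp
  have hzpos := exists_pos_coord hz0 hz1
  have htpos : ∀ i, 0 < tapp P z i := tapp_pos hP hz0 hzpos
  have hdR : (d:ℝ) ≠ 0 := by exact_mod_cast hd.ne'
  have heq : ∀ i, tapp P z i = r * z i ^ d := by
    by_contra hcon
    push_neg at hcon
    obtain ⟨j, hj⟩ := hcon
    have hjlt : r * z j ^ d < tapp P z j := lt_of_le_of_ne (hfe j) (Ne.symm hj)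
    set s : ℝ := r ^ ((d:ℝ)⁻¹) with hs
    have hsd : s ^ d = r := by
      rw [hs, ← Real.rpow_natCast (r ^ ((d:ℝ)⁻¹)) d, ← Real.rpow_mul hr0,
        inv_mul_cancel₀ hdR, Real.rpow_one]
    have hs0 : 0 ≤ s := Real.rpow_nonneg hr0 _
    set w : Fin n → ℝ := fun i => (tapp P z i) ^ ((d:ℝ)⁻¹) with hw
    have hw0 : ∀ i, 0 < w i := fun i => Real.rpow_pos_of_pos (htpos i) _
    have hwd : ∀ i, w i ^ d = tapp P z i := by
      intro i
      rw [hw]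
      rw [← Real.rpow_natCast ((tapp P z i) ^ ((d:ℝ)⁻¹)) d, ← Real.rpow_mul (htpos i).le,
        inv_mul_cancel₀ hdR, Real.rpow_one]
    have hsw : ∀ i, s * z i ≤ w i := by
      intro i
      refine le_of_pow_le_pow_left₀ hd.ne' (hw0 i).le ?_
      rw [mul_pow, hsd, hwd]
      exact hfe i
    have hswj : s * z j < w j := by
      refine lt_of_pow_lt_pow_left₀ d (hw0 j).le ?_
      rw [mul_pow, hsd, hwd]
      exact hjlt
    have hkey : ∀ i, r * w i ^ d < tapp P w i := by
      intro i
      rw [hwd]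
      have expand : r * tapp P z i = ∑ f : Fin d → Fin n, P i f * (r * ∏ a, z (f a)) := by
        rw [tapp, Finset.mul_sum]
        exact Finset.sum_congr rfl fun f _ => by ring
      rw [expand, tapp]
      apply Finset.sum_lt_sum
      · intro f _
        refine mul_le_mul_of_nonneg_left ?_ (hP i f).le
        calc r * ∏ a, z (f a) = ∏ a, (s * z (f a)) := by
              rw [Finset.prod_mul_distrib, Finset.prod_const, Finset.card_univ]
              simp [hsd]
          _ ≤ ∏ a, w (f a) :=
              Finset.prod_le_prod (fun a _ => mul_nonneg hs0 (hz0 _)) (fun a _ => hsw _)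
      · refine ⟨fun _ => j, Finset.mem_univ _, ?_⟩
        refine mul_lt_mul_of_pos_left ?_ (hP i _)
        have h1 : (∏ a : Fin d, z ((fun _ => j) a)) = z j ^ d := by
          simp [Finset.prod_const, Finset.card_univ]
        have h2 : (∏ a : Fin d, w ((fun _ => j) a)) = w j ^ d := by
          simp [Finset.prod_const, Finset.card_univ]
        rw [h1, h2, hwd]
        exact hjlt
    set c : ℝ := ∑ i, w i with hc
    have hcpos : 0 < c := Finset.sum_pos (fun i _ => hw0 i) ⟨i0, Finset.mem_univ _⟩
    set v : Fin n → ℝ := fun i => w i / c with hv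
    have hv0 : ∀ i, 0 ≤ v i := fun i => div_nonneg (hw0 i).le hcpos.le
    have hvpos : ∀ i, 0 < v i := fun i => div_pos (hw0 i) hcpos
    have hv1 : ∑ i, v i = 1 := by
      rw [hv, ← Finset.sum_div, ← hc, div_self hcpos.ne']
    have htappv : ∀ i, tapp P v i = tapp P w i / c ^ d := by
      intro i
      rw [tapp, tapp, Finset.sum_div]
      refine Finset.sum_congr rfl fun f _ => ?_
      rw [hv]
      rw [Finset.prod_div_distrib, Finset.prod_const, Finset.card_univ]
      simp [mul_div_assoc]
    have hkeyv : ∀ i, r * v i ^ d < tapp P v i := by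
      intro i
      rw [htappv i]
      have hvi : v i = w i / c := rfl
      rw [hvi]
      calc r * (w i / c) ^ d = (r * w i ^ d) / c ^ d := by rw [div_pow]; ring
        _ < tapp P w i / c ^ d := by
            exact (div_lt_div_iff_of_pos_right (by positivity)).mpr (hkey i)
    set t' : ℝ := Finset.univ.inf' (Finset.univ_nonempty_iff.mpr ⟨i0⟩)
        (fun i => tapp P v i / v i ^ d) with ht'
    have hrt' : r < t' := by
      rw [ht', Finset.lt_inf'_iff]
      intro i _
      rw [lt_div_iff₀ (pow_pos (hvpos i) d)]
      exact hkeyv i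
    have ht'fe : ∀ i, t' * v i ^ d ≤ tapp P v i := by
      intro i
      have h := Finset.inf'_le (fun i => tapp P v i / v i ^ d) (Finset.mem_univ i)
      rw [← ht'] at h
      rw [le_div_iff₀ (pow_pos (hvpos i) d)] at h
      exact h
    have ht'M : t' ≤ M := feas_le hn hd (fun i f => (hP i f).le) hv0 hv1 ht'fe hMle
    have hcontra : t' ≤ r := hmax' (t', v) ⟨le_trans hr0 hrt'.le, ht'M, hv0, hv1, ht'fe⟩
    exact absurd hcontra (not_le.mpr hrt')
  refine ⟨r, z, hr0, hz0, hz1, heq, ?_, ?_⟩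
  · intro c hc
    by_cases h : c ≤ 0
    · exact h.trans hr0
    · push_neg at h
      exact hmax' (c, u) (hmemc c h.le hc)
  · intro C hC
    exact feas_le hn hd (fun i f => (hP i f).le) hz0 hz1 hfe hC

open Filter in
lemma perron_nonneg {n d : ℕ} (hn : 0 < n) (hd : 0 < d) (S : Fin n → (Fin d → Fin n) → ℝ)
    (hS : ∀ i f, 0 ≤ S i f) :
    ∃ r z, 0 ≤ r ∧ (∀ i, 0 ≤ z i) ∧ (∑ i, z i = 1) ∧
      (∀ i, tapp S z i = r * z i ^ d) ∧
      (∀ c, (∀ i, c ≤ ∑ f : Fin d → Fin n, S i f) → c ≤ r) := by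
  set ε : ℕ → ℝ := fun m => 1 / (m + 1) with hε
  have hεpos : ∀ m, 0 < ε m := fun m => by positivity
  have hεle1 : ∀ m, ε m ≤ 1 := by
    intro m
    rw [hε]
    rw [div_le_one (by positivity)]
    have : (0:ℝ) ≤ m := by positivity
    linarith
  set P : ℕ → Fin n → (Fin d → Fin n) → ℝ := fun m i f => S i f + ε m with hPdef
  have hPpos : ∀ m i f, 0 < P m i f := fun m i f => add_pos_of_nonneg_of_pos (hS i f) (hεpos m)
  have hcard : (Finset.univ : Finset (Fin d → Fin n)).card = n ^ d := by
    simp [Finset.card_univ]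
  have hrs : ∀ m i, (∑ f : Fin d → Fin n, P m i f)
      = (∑ f : Fin d → Fin n, S i f) + (n:ℝ)^d * ε m := by
    intro m i
    rw [hPdef]
    rw [Finset.sum_add_distrib, Finset.sum_const, hcard, nsmul_eq_mul]
    push_cast
    ring
  set B : ℝ := (∑ i, ∑ f : Fin d → Fin n, S i f) + (n:ℝ)^d with hB
  have hrsB : ∀ m i, (∑ f : Fin d → Fin n, P m i f) ≤ B := by
    intro m i
    rw [hrs, hB]
    refine add_le_add ?_ ?_
    · exact Finset.single_le_sum (fun i _ => Finset.sum_nonneg fun f _ => hS i f)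
        (Finset.mem_univ i)
    · calc (n:ℝ)^d * ε m ≤ (n:ℝ)^d * 1 :=
            mul_le_mul_of_nonneg_left (hεle1 m) (by positivity)
        _ = (n:ℝ)^d := mul_one _
  choose r zf h0 hz0 hz1 heig hlow hup using fun m => perron_pos hn hd (P m) (hPpos m)
  have hrB : ∀ m, r m ≤ B := fun m => hup m B (hrsB m)
  have hmem : ∀ m, ((r m, zf m) : ℝ × (Fin n → ℝ)) ∈
      Set.Icc ((0:ℝ), (fun _ => 0 : Fin n → ℝ)) (B, fun _ => 1) := by
    intro m
    refine ⟨⟨h0 m, fun i => hz0 m i⟩, ⟨hrB m, fun i => ?_⟩⟩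
    exact (Finset.single_le_sum (fun j _ => hz0 m j) (Finset.mem_univ i)).trans_eq (hz1 m)
  obtain ⟨⟨ρ, z⟩, -, φ, hφ, htend⟩ := isCompact_Icc.tendsto_subseq hmem
  have hρt : Tendsto (fun m => r (φ m)) atTop (nhds ρ) :=
    ((continuous_fst.tendsto _).comp htend : _)
  have hzt : ∀ i, Tendsto (fun m => zf (φ m) i) atTop (nhds (z i)) :=
    fun i => ((((continuous_apply i).comp continuous_snd).tendsto _).comp htend : _)
  have hεt : Tendsto (fun m => ε (φ m)) atTop (nhds 0) :=
    tendsto_one_div_add_atTop_nhds_zero_nat.comp hφ.tendsto_atTop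
  refine ⟨ρ, z, ?_, ?_, ?_, ?_, ?_⟩
  · exact ge_of_tendsto hρt (Eventually.of_forall fun m => h0 (φ m))
  · intro i
    exact ge_of_tendsto (hzt i) (Eventually.of_forall fun m => hz0 (φ m) i)
  · have h1 : Tendsto (fun m => ∑ i, zf (φ m) i) atTop (nhds (∑ i, z i)) :=
      tendsto_finset_sum _ fun i _ => hzt i
    rw [show (fun m => ∑ i, zf (φ m) i) = fun _ => (1:ℝ) from funext fun m => hz1 (φ m)] at h1
    exact tendsto_nhds_unique h1 tendsto_const_nhds
  · intro i
    have hL : Tendsto (fun m => tapp (P (φ m)) (zf (φ m)) i) atTop (nhds (tapp S z i)) := by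
      have h2 := tendsto_finset_sum (Finset.univ : Finset (Fin d → Fin n)) (fun f _ =>
        (Tendsto.mul (tendsto_const_nhds.add hεt)
          (tendsto_finset_prod (Finset.univ : Finset (Fin d)) (fun a _ => hzt (f a))) :
          Tendsto (fun m => (S i f + ε (φ m)) * ∏ a, zf (φ m) (f a)) atTop
            (nhds ((S i f + 0) * ∏ a, z (f a)))))
      simpa [tapp, hPdef] using h2
    have hR : Tendsto (fun m => r (φ m) * zf (φ m) i ^ d) atTop (nhds (ρ * z i ^ d)) :=
      hρt.mul ((hzt i).pow d)
    rw [show (fun m => tapp (P (φ m)) (zf (φ m)) i) = fun m => r (φ m) * zf (φ m) i ^ d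
      from funext fun m => heig (φ m) i] at hL
    exact tendsto_nhds_unique hL hR
  · intro c hc
    refine ge_of_tendsto hρt (Eventually.of_forall fun m => ?_)
    refine hlow (φ m) c fun i => ?_
    rw [hrs]
    exact le_add_of_le_of_nonneg (hc i) (by positivity)

lemma key_ub (n k : ℕ) (hn : 0 < n) (hk : 2 ≤ k) (T : Fin n → (Fin (k-1) → Fin n) → ℝ)
    (hT : ∀ i f, 0 ≤ T i f) (hr : ∀ i, 0 < rowSum n k T i)
    (ρc : ℂ) (x : Fin n → ℂ) (hx : x ≠ 0)
    (heq : ∀ i, (∑ f : Fin (k-1) → Fin n, (T i f : ℂ) * ∏ a, x (f a)) = ρc * x i ^ (k-1)) :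
    ‖ρc‖ ≤
      Finset.univ.sup' ⟨⟨0, hn⟩, Finset.mem_univ _⟩ (fun i => avgRowSum n k T i) := by
  have hd : 0 < k - 1 := by omega
  obtain ⟨i, -, hmax⟩ := Finset.exists_max_image Finset.univ
    (fun i => ‖x i‖ / rowSum n k T i) ⟨⟨0, hn⟩, Finset.mem_univ _⟩
  set c : ℝ := ‖x i‖ / rowSum n k T i with hc
  have hxj : ∃ j, x j ≠ 0 := by
    by_contra h; push_neg at h; exact hx (funext fun j => h j)
  obtain ⟨j, hj⟩ := hxj
  have hc0 : 0 < c := by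
    have h1 : 0 < ‖x j‖ / rowSum n k T j :=
      div_pos (norm_pos_iff.mpr hj) (hr j)
    exact lt_of_lt_of_le h1 (hmax j (Finset.mem_univ _))
  have hxi : ‖x i‖ = c * rowSum n k T i := by
    rw [hc, div_mul_cancel₀]
    exact (hr i).ne'
  have hxipos : 0 < ‖x i‖ := by
    rw [hxi]; exact mul_pos hc0 (hr i)
  have habs_le : ∀ j, ‖x j‖ ≤ c * rowSum n k T j := by
    intro j
    have h2 := hmax j (Finset.mem_univ _)
    rwa [div_le_iff₀ (hr j)] at h2
  have key : ‖ρc‖ * ‖x i‖ ^ (k-1)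
      ≤ avgRowSum n k T i * ‖x i‖ ^ (k-1) := by
    calc ‖ρc‖ * ‖x i‖ ^ (k-1)
        = ‖ρc * x i ^ (k-1)‖ := by rw [norm_mul, norm_pow]
      _ = ‖∑ f : Fin (k-1) → Fin n, (T i f : ℂ) * ∏ a, x (f a)‖ := by rw [heq i]
      _ ≤ ∑ f : Fin (k-1) → Fin n, ‖(T i f : ℂ) * ∏ a, x (f a)‖ :=
          norm_sum_le _ _
      _ = ∑ f : Fin (k-1) → Fin n, T i f * ∏ a, ‖x (f a)‖ := by
          refine Finset.sum_congr rfl fun f _ => ?_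
          rw [norm_mul, norm_prod, Complex.norm_real, Real.norm_of_nonneg (hT i f)]
      _ ≤ ∑ f : Fin (k-1) → Fin n, T i f * ∏ a, (c * rowSum n k T (f a)) :=
          Finset.sum_le_sum fun f _ => mul_le_mul_of_nonneg_left
            (Finset.prod_le_prod (fun a _ => norm_nonneg _)
              (fun a _ => habs_le _)) (hT i f)
      _ = c ^ (k-1) * ∑ f : Fin (k-1) → Fin n, T i f * ∏ a, rowSum n k T (f a) := by
          rw [Finset.mul_sum]
          refine Finset.sum_congr rfl fun f _ => ?_
          rw [Finset.prod_mul_distrib, Finset.prod_const, Finset.card_univ]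
          simp only [Fintype.card_fin]
          ring
      _ = avgRowSum n k T i * ‖x i‖ ^ (k-1) := by
          have hrne : rowSum n k T i ^ (k-1) ≠ 0 := (pow_pos (hr i) _).ne'
          rw [avgRowSum, hxi, mul_pow, div_mul_eq_mul_div, eq_div_iff hrne]
          ring
  have h3 := le_of_mul_le_mul_right key (pow_pos hxipos (k-1))
  exact h3.trans (Finset.le_sup' _ (Finset.mem_univ i))

/-- For a nonnegative tensor of order `k ≥ 2` and dimension `n` with all row sums positive,
`min_i m_i(T) ≤ ρ(T) ≤ max_i m_i(T)`. -/
theorem stmt2 (n k : ℕ) (hn : 0 < n) (hk : 2 ≤ k)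
    (T : Fin n → (Fin (k-1) → Fin n) → ℝ)
    (hT : ∀ i f, 0 ≤ T i f) (hr : ∀ i, 0 < rowSum n k T i) :
    Finset.univ.inf' ⟨⟨0, hn⟩, Finset.mem_univ _⟩ (fun i => avgRowSum n k T i)
        ≤ specRad n k T ∧
      specRad n k T ≤
        Finset.univ.sup' ⟨⟨0, hn⟩, Finset.mem_univ _⟩ (fun i => avgRowSum n k T i) := by
  have hd : 0 < k - 1 := by omega
  have havg_nonneg : ∀ i, 0 ≤ avgRowSum n k T i := fun i =>
    div_nonneg (Finset.sum_nonneg fun f _ => mul_nonneg (hT i f)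
      (Finset.prod_nonneg fun a _ => (hr _).le)) (pow_nonneg (hr i).le _)
  have hub : ∀ y ∈ {r : ℝ | ∃ ρ : ℂ, ‖ρ‖ = r ∧ ∃ x : Fin n → ℂ, x ≠ 0 ∧
      ∀ i, (∑ f : Fin (k-1) → Fin n, (T i f : ℂ) * ∏ a, x (f a)) = ρ * x i ^ (k-1)},
      y ≤ Finset.univ.sup' ⟨⟨0, hn⟩, Finset.mem_univ _⟩ (fun i => avgRowSum n k T i) := by
    rintro y ⟨ρc, habs, xx, hxne, heqc⟩
    rw [← habs]
    exact key_ub n k hn hk T hT hr ρc xx hxne heqc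
  have hbdd : BddAbove {r : ℝ | ∃ ρ : ℂ, ‖ρ‖ = r ∧ ∃ x : Fin n → ℂ, x ≠ 0 ∧
      ∀ i, (∑ f : Fin (k-1) → Fin n, (T i f : ℂ) * ∏ a, x (f a)) = ρ * x i ^ (k-1)} :=
    ⟨_, hub⟩
  set S : Fin n → (Fin (k-1) → Fin n) → ℝ :=
    fun i f => (T i f * ∏ a, rowSum n k T (f a)) / rowSum n k T i ^ (k-1) with hSdef
  have hSnn : ∀ i f, 0 ≤ S i f := fun i f =>
    div_nonneg (mul_nonneg (hT i f) (Finset.prod_nonneg fun a _ => (hr _).le))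
      (pow_nonneg (hr i).le _)
  have hSrow : ∀ i, (∑ f : Fin (k-1) → Fin n, S i f) = avgRowSum n k T i := by
    intro i
    rw [avgRowSum, Finset.sum_div]
  obtain ⟨ρ, z, hρ0, hz0, hz1, heig, hlow⟩ := perron_nonneg hn hd S hSnn
  have hmin : Finset.univ.inf' ⟨⟨0, hn⟩, Finset.mem_univ _⟩
      (fun i => avgRowSum n k T i) ≤ ρ := by
    refine hlow _ fun i => ?_
    rw [hSrow i]
    exact Finset.inf'_le _ (Finset.mem_univ i)
  set x : Fin n → ℝ := fun i => rowSum n k T i * z i with hxdef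
  have heigT : ∀ i, (∑ f : Fin (k-1) → Fin n, T i f * ∏ a, x (f a)) = ρ * x i ^ (k-1) := by
    intro i
    have h1 : ∀ f : Fin (k-1) → Fin n,
        T i f * ∏ a, x (f a) = (S i f * ∏ a, z (f a)) * rowSum n k T i ^ (k-1) := by
      intro f
      show T i f * ∏ a, (rowSum n k T (f a) * z (f a))
        = ((T i f * ∏ a, rowSum n k T (f a)) / rowSum n k T i ^ (k-1) * ∏ a, z (f a))
          * rowSum n k T i ^ (k-1)
      rw [Finset.prod_mul_distrib]
      have hne : rowSum n k T i ^ (k-1) ≠ 0 := (pow_pos (hr i) _).ne'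
      field_simp
    rw [Finset.sum_congr rfl fun f _ => h1 f, ← Finset.sum_mul]
    have h2 : (∑ f : Fin (k-1) → Fin n, S i f * ∏ a, z (f a)) = ρ * z i ^ (k-1) := heig i
    rw [h2]
    show _ = ρ * (rowSum n k T i * z i) ^ (k-1)
    rw [mul_pow]
    ring
  obtain ⟨j, hzjpos⟩ := exists_pos_coord hz0 hz1
  have hxj : x j ≠ 0 := (mul_pos (hr j) hzjpos).ne'
  have hmemE : ρ ∈ {r : ℝ | ∃ ρ' : ℂ, ‖ρ'‖ = r ∧ ∃ x : Fin n → ℂ, x ≠ 0 ∧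
      ∀ i, (∑ f : Fin (k-1) → Fin n, (T i f : ℂ) * ∏ a, x (f a)) = ρ' * x i ^ (k-1)} := by
    refine ⟨(ρ:ℂ), by simp [Complex.norm_real, abs_of_nonneg hρ0], fun i => (x i : ℂ), ?_, ?_⟩
    · intro h
      apply hxj
      have h4 : ((x j : ℝ) : ℂ) = 0 := by simpa using congrFun h j
      exact_mod_cast h4
    · intro i
      have h3 := congrArg (fun t : ℝ => (t:ℂ)) (heigT i)
      push_cast at h3
      exact h3
  constructor
  · exact hmin.trans (le_csSup hbdd hmemE)
  · refine Real.sSup_le hub ?_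
    exact (havg_nonneg ⟨0, hn⟩).trans (Finset.le_sup' _ (Finset.mem_univ _))
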